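/- For any constants ω₁₂, ω₂₃, ω₁₃ ∈ ℂ, the bracket on ℂ[u,v,w] defined as a biderivation by {u,v} = uv − 2w − ω₁₃, {v,w} = vw − 2u − ω₁₂, {w,u} = wu − 2v − ω₂₃ satisfies the Jacobi identity: for all polynomials f,g,h ∈ ℂ[u,v,w], {f,{g,h}} + {g,{h,f}} + {h,{f,g}} = 0. In other words, the abstract algebra of the formulae {G₁₂,G₂₃}=G₁₂G₂₃−2G₁₃−ω₁₃, {G₂₃,G₁₃}=G₂₃G₁₃−2G₁₂−ω₁₂, {G₁₃,G₁₂}=G₁₂G₁₃−2G₂₃−ω₂₃ is a Poisson algebra for any choice of the constants ω_{i,j}. -/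

import Mathlib

open MvPolynomial


lemma pderiv_comm' (i j : Fin 3) (p : MvPolynomial (Fin 3) ℂ) :
    pderiv i (pderiv j p) = pderiv j (pderiv i p) := by
  induction p using MvPolynomial.induction_on' with
  | monomial s a =>
    rcases eq_or_ne i j with rfl | hij
    · rfl
    · simp only [pderiv_monomial, tsub_tsub]
      rw [add_comm (Finsupp.single j 1)]
      congr 1
      simp [Finsupp.single_apply, hij, hij.symm, Finsupp.tsub_apply]
      ring
  | add p q hp hq => simp [hp, hq]

/-- The bracket on `ℂ[u,v,w]` (with `u = X 0`, `v = X 1`, `w = X 2`) defined as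
the biderivation with `{u,v} = uv − 2w − ω₁₃`, `{v,w} = vw − 2u − ω₁₂`,
`{w,u} = wu − 2v − ω₂₃`. -/
noncomputable def d4Bracket (ω₁₂ ω₂₃ ω₁₃ : ℂ) (f g : MvPolynomial (Fin 3) ℂ) :
    MvPolynomial (Fin 3) ℂ :=
  (X 0 * X 1 - 2 * X 2 - C ω₁₃) * (pderiv 0 f * pderiv 1 g - pderiv 1 f * pderiv 0 g)
  + (X 1 * X 2 - 2 * X 0 - C ω₁₂) * (pderiv 1 f * pderiv 2 g - pderiv 2 f * pderiv 1 g)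
  + (X 2 * X 0 - 2 * X 1 - C ω₂₃) * (pderiv 2 f * pderiv 0 g - pderiv 0 f * pderiv 2 g)

set_option maxHeartbeats 2000000 in
/-- For any constants `ω₁₂, ω₂₃, ω₁₃ ∈ ℂ`, the bracket with
`{u,v} = uv − 2w − ω₁₃`, `{v,w} = vw − 2u − ω₁₂`, `{w,u} = wu − 2v − ω₂₃`
satisfies the Jacobi identity, i.e. it defines a Poisson algebra structure
on `ℂ[u,v,w]` for any choice of the constants. -/
theorem d4Bracket_jacobi (ω₁₂ ω₂₃ ω₁₃ : ℂ) (f g h : MvPolynomial (Fin 3) ℂ) :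
    d4Bracket ω₁₂ ω₂₃ ω₁₃ f (d4Bracket ω₁₂ ω₂₃ ω₁₃ g h)
      + d4Bracket ω₁₂ ω₂₃ ω₁₃ g (d4Bracket ω₁₂ ω₂₃ ω₁₃ h f)
      + d4Bracket ω₁₂ ω₂₃ ω₁₃ h (d4Bracket ω₁₂ ω₂₃ ω₁₃ f g) = 0 := by
  have two : ∀ i : Fin 3, pderiv i (2 : MvPolynomial (Fin 3) ℂ) = 0 := by
    intro i
    rw [show (2 : MvPolynomial (Fin 3) ℂ) = C 2 from (map_ofNat C 2).symm]
    exact pderiv_C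
  simp only [d4Bracket, map_add, map_sub, pderiv_mul, pderiv_C, two,
    pderiv_X_self, pderiv_X_of_ne (by decide : (0:Fin 3) ≠ 1),
    pderiv_X_of_ne (by decide : (1:Fin 3) ≠ 0),
    pderiv_X_of_ne (by decide : (0:Fin 3) ≠ 2),
    pderiv_X_of_ne (by decide : (2:Fin 3) ≠ 0),
    pderiv_X_of_ne (by decide : (1:Fin 3) ≠ 2),
    pderiv_X_of_ne (by decide : (2:Fin 3) ≠ 1),
    pderiv_comm' 1 0, pderiv_comm' 2 0, pderiv_comm' 2 1]
  ring
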